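/- The dotted six-vertex weights are related to the undotted ones by a flip symmetry: for all i,j,k,l in {0,1}, ((x-qy)/(x-y)) * W_{y/x}(i,j;k,l) = (-1)^{i-k} * q^{1-j} * W_{x/(qy)}(k, 1-j; i, 1-l), where W denotes the six-vertex weights W_{y/x}(0,0;0,0)=1, W_{y/x}(1,0;1,0)=q(x-y)/(x-qy), W_{y/x}(1,0;0,1)=(1-q)x/(x-qy), W_{y/x}(0,1;1,0)=(1-q)y/(x-qy), W_{y/x}(0,1;0,1)=(x-y)/(x-qy), W_{y/x}(1,1;1,1)=1, zero otherwise. Here W_{x/(qy)}(a,b;c,d) means the same weight function with the spectral ratio y/x replaced by x/(qy), i.e. with x replaced by 1/x and y replaced by 1/(qy). -/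
import Mathlib


/-- The weights of the stochastic six-vertex model. -/
def W6 {F : Type*} [Field F] (q x y : F) (i j k l : Fin 2) : F :=
  if (i, j, k, l) = (0, 0, 0, 0) then 1
  else if (i, j, k, l) = (1, 0, 1, 0) then q * (x - y) / (x - q * y)
  else if (i, j, k, l) = (1, 0, 0, 1) then (1 - q) * x / (x - q * y)
  else if (i, j, k, l) = (0, 1, 1, 0) then (1 - q) * y / (x - q * y)
  else if (i, j, k, l) = (0, 1, 0, 1) then (x - y) / (x - q * y)
  else if (i, j, k, l) = (1, 1, 1, 1) then 1
  else 0

set_option maxHeartbeats 1600000 in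
/-- Flip symmetry relating the dotted six-vertex weights to the undotted ones:
`((x-qy)/(x-y)) ⬝ W_{y/x}(i,j;k,l) = (-1)^{i-k} q^{1-j} W_{x/(qy)}(k,1-j;i,1-l)`,
where the weight with modified spectral parameters is obtained by substituting
`x ↦ 1/x` and `y ↦ 1/(qy)`. -/
theorem sixVertex_flip_symmetry {F : Type*} [Field F] (q x y : F)
    (hx : x ≠ 0) (hy : y ≠ 0) (hq : q ≠ 0)
    (hxy : x - y ≠ 0) (hxqy : x - q * y ≠ 0)
    (hd : x⁻¹ - q * (q * y)⁻¹ ≠ 0) (hd' : x⁻¹ - (q * y)⁻¹ ≠ 0)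
    (i j k l : Fin 2) :
    ((x - q * y) / (x - y)) * W6 q x y i j k l =
      (-1 : F) ^ ((i : ℤ) - (k : ℤ)) * q ^ (1 - (j : ℕ)) *
        W6 q x⁻¹ (q * y)⁻¹ k (1 - j) i (1 - l) := by
  have hyx : y - x ≠ 0 := fun h => hxy (by linear_combination -h)
  have h1 : -(x*q) + q*y ≠ 0 := fun h => (mul_ne_zero hq hyx) (by linear_combination h)
  have h2 : x*q*y - x^2*q ≠ 0 := fun h => (mul_ne_zero (mul_ne_zero hx hq) hyx) (by linear_combination h)
  have h3 : -(x*q^2*y) + q^2*y^2 ≠ 0 := fun h => (mul_ne_zero (mul_ne_zero (mul_ne_zero hq hq) hy) hyx) (by linear_combination h)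
  fin_cases i <;> fin_cases j <;> fin_cases k <;> fin_cases l <;>
    norm_num [W6, Prod.ext_iff] <;> field_simp <;>
    first
    | ring1
    | linear_combination -(x - q*y) * mul_inv_cancel₀ h1
    | linear_combination (x*q*y - x*y + q*y^2 - q^2*y^2) * mul_inv_cancel₀ h2
    | linear_combination (x*q*y - x*q^2*y - x^2 + x^2*q) * mul_inv_cancel₀ h3
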